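/- arXiv:1904.01542 — 5 statements merged into one kernel-verified Lean document; each statement's English description precedes it below -/
import Mathlib

section
/- For any group model 𝔊, the treewidth of the incidence graph B(𝔊) is at most the treewidth of the intersection graph I(𝔊) plus one: tw(B(𝔊)) ≤ tw(I(𝔊)) + 1. -/
open SimpleGraph

/-- A tree decomposition of a graph `G` with index type `ι`. -/
structure TreeDecomp {V : Type} (G : SimpleGraph V) (ι : Type) where
  tree : SimpleGraph ι
  isTree : tree.IsTree
  bag : ι → Set V
  covers : ∀ v : V, ∃ x : ι, v ∈ bag x
  coversEdge : ∀ ⦃u v : V⦄, G.Adj u v → ∃ x : ι, u ∈ bag x ∧ v ∈ bag x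
  subtree : ∀ v : V, (tree.induce {x : ι | v ∈ bag x}).Connected

/-- The treewidth of a graph: the least `n` such that there is a tree decomposition
all of whose bags have at most `n + 1` elements. -/
noncomputable def treewidth {V : Type} (G : SimpleGraph V) : ℕ :=
  sInf {n : ℕ | ∃ (ι : Type) (d : TreeDecomp G ι),
    ∀ x : ι, ∃ s : Finset V, ↑s = d.bag x ∧ s.card ≤ n + 1}

/-- The intersection graph of a group model: vertices are the groups, two distinct
groups are adjacent iff they intersect. -/
def intersectionGraph {N M : ℕ} (Gr : Fin M → Finset (Fin N)) : SimpleGraph (Fin M) :=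
  SimpleGraph.fromRel (fun a b => (Gr a ∩ Gr b).Nonempty)

/-- The incidence graph of a group model: a bipartite graph between elements and
groups, with adjacency given by membership. -/
def incidenceGraph {N M : ℕ} (Gr : Fin M → Finset (Fin N)) :
    SimpleGraph (Fin N ⊕ Fin M) :=
  SimpleGraph.fromRel (fun a b =>
    match a, b with
    | Sum.inl e, Sum.inr g => e ∈ Gr g
    | _, _ => False)

namespace TWAux


open SimpleGraph Walk

variable {V : Type} {G : SimpleGraph V}



/-- A walk whose support lies in `S` yields reachability in the induced graph. -/
lemma reachable_induce_of_walk {S : Set V} :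
    ∀ {u v : V} (w : G.Walk u v), (∀ a ∈ w.support, a ∈ S) →
      ∀ (hu : u ∈ S) (hv : v ∈ S), (G.induce S).Reachable ⟨u, hu⟩ ⟨v, hv⟩ := by
  intro u v w
  induction w with
  | nil => intro _ hu hv; exact Reachable.refl _
  | @cons u x v h p ih =>
    intro hs hu hv
    have hx : x ∈ S := hs x (by simp)
    have hadj : (G.induce S).Adj ⟨u, hu⟩ ⟨x, hx⟩ := h
    exact (hadj.reachable).trans (ih (fun a ha => hs a (by simp [ha])) hx hv)

/-- From reachability in the induced graph, extract a walk with support in `S`. -/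
lemma exists_walk_of_reachable_induce {S : Set V} {u v : V} {hu : u ∈ S} {hv : v ∈ S}
    (h : (G.induce S).Reachable ⟨u, hu⟩ ⟨v, hv⟩) :
    ∃ w : G.Walk u v, ∀ a ∈ w.support, a ∈ S := by
  obtain ⟨w⟩ := h
  let φ : G.induce S →g G := ⟨Subtype.val, fun {a b} hab => hab⟩
  refine ⟨w.map φ, ?_⟩
  intro a ha
  rw [Walk.support_map] at ha
  obtain ⟨⟨a', ha'⟩, _, rfl⟩ := List.mem_map.1 ha
  exact ha'

open scoped Classical in
/-- The support of a walk induces a connected subgraph. -/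
lemma induce_support_connected {u v : V} (w : G.Walk u v) :
    (G.induce {a | a ∈ w.support}).Connected := by
  rw [connected_iff]
  refine ⟨?_, ⟨⟨u, w.start_mem_support⟩⟩⟩
  have key : ∀ (a : {a | a ∈ w.support}),
      (G.induce {a | a ∈ w.support}).Reachable a ⟨u, w.start_mem_support⟩ := by
    rintro ⟨a, ha⟩
    have := reachable_induce_of_walk (S := {a | a ∈ w.support}) (w.takeUntil a ha)
      (fun b hb => w.support_takeUntil_subset ha hb) w.start_mem_support ha
    exact this.symm
  intro a b
  exact (key a).trans (key b).symm




section Tree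
variable {T : SimpleGraph V} (hT : T.IsTree)


/-- The unique path between two vertices of a tree. -/
noncomputable def tpath (u v : V) : T.Walk u v := (hT.existsUnique_path u v).choose

lemma tpath_isPath (u v : V) : (tpath hT u v).IsPath :=
  (hT.existsUnique_path u v).choose_spec.1

lemma tpath_unique {u v : V} {p : T.Walk u v} (hp : p.IsPath) : p = tpath hT u v :=
  (hT.existsUnique_path u v).choose_spec.2 p hp

/-- In a tree, a connected induced set contains the unique path between its members. -/
lemma support_tpath_subset {S : Set V} (hC : (T.induce S).Connected) {u v : V}
    (hu : u ∈ S) (hv : v ∈ S) : ∀ a ∈ (tpath hT u v).support, a ∈ S := by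
  classical
  obtain ⟨w, hw⟩ := exists_walk_of_reachable_induce (G := T)
    (hC.preconnected ⟨u, hu⟩ ⟨v, hv⟩)
  have hb : w.bypass = tpath hT u v := tpath_unique hT w.bypass_isPath
  intro a ha
  rw [← hb] at ha
  exact hw a (w.support_bypass_subset ha)

open scoped Classical in
/-- Split a walk at the first vertex belonging to `S`. -/
lemma exists_first_mem {S : Set V} :
    ∀ {u v : V} (w : T.Walk u v), v ∈ S →
      ∃ (m : V) (w1 : T.Walk u m) (w2 : T.Walk m v), m ∈ S ∧ w1.append w2 = w ∧
        ∀ a ∈ w1.support, a ∈ S → a = m := by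
  intro u v w
  induction w with
  | nil =>
    intro hv
    exact ⟨_, Walk.nil, Walk.nil, hv, rfl, by simp⟩
  | @cons u x v h p ih =>
    intro hv
    by_cases hu : u ∈ S
    · refine ⟨u, Walk.nil, Walk.cons h p, hu, rfl, by simp⟩
    · obtain ⟨m, w1, w2, hm, happ, hfirst⟩ := ih hv
      refine ⟨m, Walk.cons h w1, w2, hm, by rw [Walk.cons_append, happ], ?_⟩
      intro a ha haS
      rcases (by simpa using ha : a = u ∨ a ∈ w1.support) with rfl | ha'
      · exact absurd haS hu
      · exact hfirst a ha' haS

/-- Median: the three unique paths between three vertices of a tree share a vertex. -/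
lemma median (x y z : V) : ∃ m, m ∈ (tpath hT x y).support ∧
    m ∈ (tpath hT y z).support ∧ m ∈ (tpath hT x z).support := by
  set S : Set V := {a | a ∈ (tpath hT x y).support} with hS
  have hSconn : (T.induce S).Connected := induce_support_connected _
  have hxS : x ∈ S := (tpath hT x y).start_mem_support
  have hyS : y ∈ S := (tpath hT x y).end_mem_support
  obtain ⟨m, w1, w2, hmS, happ, hfirst⟩ :=
    exists_first_mem (S := S) (tpath hT x z).reverse hxS
  have hwpath : (tpath hT x z).reverse.IsPath := (tpath_isPath hT x z).reverse
  have hw1path : w1.IsPath := by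
    have := hwpath; rw [← happ] at this
    exact this.of_append_left
  -- candidate path from y to z through m
  have hq_sub : ∀ a ∈ (tpath hT y m).support, a ∈ S :=
    support_tpath_subset hT hSconn hyS hmS
  have hcand : ((tpath hT y m).append w1.reverse).IsPath := by
    rw [Walk.isPath_def, Walk.support_append]
    refine List.Nodup.append ?_ ?_ ?_
    · exact (tpath_isPath hT y m).support_nodup
    · exact (hw1path.reverse.support_nodup).tail
    · intro a haq har
      have haS : a ∈ S := hq_sub a haq
      have hrev : w1.reverse.support.Nodup := hw1path.reverse.support_nodup
      have hne : a ≠ m := by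
        intro rfl'
        subst rfl'
        rw [Walk.support_eq_cons w1.reverse] at hrev
        exact (List.nodup_cons.1 hrev).1 har
      have haw1 : a ∈ w1.support := by
        have : a ∈ w1.reverse.support := List.mem_of_mem_tail har
        rwa [Walk.support_reverse, List.mem_reverse] at this
      exact hne (hfirst a haw1 haS)
  have hcand_eq : (tpath hT y m).append w1.reverse = tpath hT y z := tpath_unique hT hcand
  refine ⟨m, hmS, ?_, ?_⟩
  · rw [← hcand_eq]
    exact Walk.subset_support_append_left _ _ (tpath hT y m).end_mem_support
  · have hm1 : m ∈ w1.support := w1.end_mem_support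
    have : m ∈ (w1.append w2).support := Walk.subset_support_append_left _ _ hm1
    rw [happ, Walk.support_reverse, List.mem_reverse] at this
    exact this

/-- Ternary Helly property for connected induced subsets of a tree. -/
lemma ternary_helly (hT : T.IsTree) {A B C : Set V}
    (hA : (T.induce A).Connected) (hB : (T.induce B).Connected) (hC : (T.induce C).Connected)
    (hab : (A ∩ B).Nonempty) (hbc : (B ∩ C).Nonempty) (hac : (A ∩ C).Nonempty) :
    (A ∩ B ∩ C).Nonempty := by
  obtain ⟨x, hxA, hxB⟩ := hab
  obtain ⟨y, hyB, hyC⟩ := hbc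
  obtain ⟨z, hzA, hzC⟩ := hac
  obtain ⟨m, hxy, hyz, hxz⟩ := median hT x y z
  exact ⟨m, ⟨support_tpath_subset hT hA hxA hzA m hxz,
    support_tpath_subset hT hB hxB hyB m hxy⟩,
    support_tpath_subset hT hC hyC hzC m hyz⟩

/-- Intersection of two connected induced subsets of a tree is connected (if nonempty). -/
lemma inter_connected (hT : T.IsTree) {A B : Set V}
    (hA : (T.induce A).Connected) (hB : (T.induce B).Connected)
    (hne : (A ∩ B).Nonempty) : (T.induce (A ∩ B)).Connected := by
  rw [connected_iff]
  obtain ⟨c, hc⟩ := hne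
  refine ⟨?_, ⟨⟨c, hc⟩⟩⟩
  rintro ⟨u, huA, huB⟩ ⟨v, hvA, hvB⟩
  have h1 : ∀ a ∈ (tpath hT u v).support, a ∈ A ∩ B := fun a ha =>
    ⟨support_tpath_subset hT hA huA hvA a ha, support_tpath_subset hT hB huB hvB a ha⟩
  exact reachable_induce_of_walk (tpath hT u v) h1 ⟨huA, huB⟩ ⟨hvA, hvB⟩

/-- Helly property for a finite family of connected induced subsets of a tree. -/
lemma helly_aux (hT : T.IsTree) : ∀ (L : List (Set V)) (A : Set V),
    (T.induce A).Connected → (∀ S ∈ L, (T.induce S).Connected) →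
    (∀ S ∈ L, (A ∩ S).Nonempty) → (∀ S ∈ L, ∀ S' ∈ L, (S ∩ S').Nonempty) →
    ∃ m, m ∈ A ∧ ∀ S ∈ L, m ∈ S := by
  intro L
  induction L with
  | nil =>
    intro A hA _ _ _
    obtain ⟨⟨a, ha⟩⟩ := hA.nonempty
    exact ⟨a, ha, by simp⟩
  | cons B L2 ih =>
    intro A hA hconn hpairA hpair
    have hBconn := hconn B (by simp)
    have hABne : (A ∩ B).Nonempty := hpairA B (by simp)
    obtain ⟨m, ⟨hmA, hmB⟩, hmL2⟩ := ih (A ∩ B) (inter_connected hT hA hBconn hABne)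
      (fun S hS => hconn S (by simp [hS]))
      (fun S hS => ternary_helly hT hA hBconn (hconn S (by simp [hS])) hABne
        (hpair B (by simp) S (by simp [hS])) (hpairA S (by simp [hS])))
      (fun S hS S' hS' => hpair S (by simp [hS]) S' (by simp [hS']))
    refine ⟨m, hmA, ?_⟩
    intro S hS
    rcases (by simpa using hS : S = B ∨ S ∈ L2) with rfl | hS'
    · exact hmB
    · exact hmL2 S hS'

end Tree

section LeafExt
variable {ι ε : Type}

/-- Attach, for each `e : ε`, a pendant leaf at `f e` to the graph `T`. -/
def leafExt (T : SimpleGraph ι) (f : ε → ι) : SimpleGraph (ι ⊕ ε) :=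
  SimpleGraph.fromRel (fun a b => match a, b with
    | Sum.inl x, Sum.inl y => T.Adj x y
    | Sum.inl x, Sum.inr e => x = f e
    | _, _ => False)

variable {T : SimpleGraph ι} {f : ε → ι}

lemma leafExt_adj_inl_inl {x y : ι} :
    (leafExt T f).Adj (Sum.inl x) (Sum.inl y) ↔ T.Adj x y := by
  rw [leafExt, fromRel_adj]
  constructor
  · rintro ⟨hne, h | h⟩
    · exact h
    · exact h.symm
  · intro h
    exact ⟨by simp [h.ne], Or.inl h⟩

lemma leafExt_adj_inr {e : ε} {w : ι ⊕ ε} :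
    (leafExt T f).Adj (Sum.inr e) w ↔ w = Sum.inl (f e) := by
  rw [leafExt, fromRel_adj]
  constructor
  · rintro ⟨hne, h | h⟩
    · exact absurd h (by cases w <;> simp)
    · cases w with
      | inl x => simp_all
      | inr e' => simp_all
  · rintro rfl
    exact ⟨by simp, Or.inr rfl⟩

/-- The graph homomorphism embedding `T` into its leaf extension. -/
def leafExtHom (T : SimpleGraph ι) (f : ε → ι) : T →g leafExt T f :=
  ⟨Sum.inl, fun h => leafExt_adj_inl_inl.2 h⟩

lemma leafExt_connected (hT : T.Connected) : (leafExt T f).Connected := by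
  rw [connected_iff]
  obtain ⟨x0⟩ := hT.nonempty
  have key : ∀ w : ι ⊕ ε, (leafExt T f).Reachable w (Sum.inl x0) := by
    intro w
    have inlkey : ∀ x : ι, (leafExt T f).Reachable (Sum.inl x) (Sum.inl x0) := by
      intro x
      obtain ⟨p⟩ := hT.preconnected x x0
      exact ⟨p.map (leafExtHom T f)⟩
    cases w with
    | inl x => exact inlkey x
    | inr e =>
      exact ((leafExt_adj_inr.2 rfl : (leafExt T f).Adj (Sum.inr e) _).reachable).trans
        (inlkey (f e))
  exact ⟨fun a b => (key a).trans (key b).symm, ⟨Sum.inl x0⟩⟩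

/-- Project a walk in the leaf extension all of whose vertices are `inl` back to `T`. -/
lemma leafExt_proj :
    ∀ {u v : ι ⊕ ε} (w : (leafExt T f).Walk u v),
      (∀ x ∈ w.support, ∃ a, x = Sum.inl a) → ∀ {a b : ι}, u = Sum.inl a → v = Sum.inl b →
      ∃ w' : T.Walk a b, w'.support.map Sum.inl = w.support ∧
        w'.edges.map (Sym2.map Sum.inl) = w.edges := by
  intro u v w
  induction w with
  | nil =>
    rintro _ a b rfl hb
    obtain rfl : a = b := Sum.inl_injective hb
    exact ⟨Walk.nil, by simp, by simp⟩
  | @cons u x v hadj p ih =>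
    rintro h a b rfl hb
    obtain ⟨a₂, rfl⟩ := h x (by simp)
    have hTadj : T.Adj a a₂ := leafExt_adj_inl_inl.1 hadj
    obtain ⟨w', hs, he⟩ := ih (fun y hy => h y (by simp [hy])) rfl hb
    refine ⟨Walk.cons hTadj w', by simp [hs], by simp [he]⟩

lemma leafExt_isAcyclic (hT : T.IsAcyclic) : (leafExt T f).IsAcyclic := by
  classical
  intro v c hc
  rcases em (∃ e : ε, Sum.inr e ∈ c.support) with hmem | hmem
  · obtain ⟨e, he⟩ := hmem
    have hc' : (c.rotate _ he).IsCycle := hc.rotate he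
    set c' := c.rotate _ he with hc'def
    clear_value c'
    cases c' with
    | nil => exact hc'.ne_nil rfl
    | @cons u x v hadj p =>
      obtain rfl : x = Sum.inl (f e) := leafExt_adj_inr.1 hadj
      obtain ⟨y, hadj2, q, hq⟩ := Walk.exists_eq_cons_of_ne (by simp) p.reverse
      obtain rfl : y = Sum.inl (f e) := leafExt_adj_inr.1 hadj2
      have hpsupp : p.support = q.support.reverse ++ [Sum.inr e] := by
        conv_lhs => rw [← p.reverse_reverse, hq]
        rw [Walk.support_reverse, Walk.support_cons]
        simp
      have hnd : p.support.Nodup := by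
        have := hc'.support_nodup
        rwa [Walk.support_cons, List.tail_cons] at this
      cases q with
      | nil =>
        have h3 := hc'.three_le_length
        have hplen : p.length = 1 := by
          have : p.reverse.length = 1 := by rw [hq]; simp
          simpa using this
        rw [Walk.length_cons, hplen] at h3
        omega
      | @cons u' x' v' hadj3 q2 =>
        rw [hpsupp] at hnd
        have hqnd : (Walk.cons hadj3 q2).support.Nodup := by
          have := hnd.of_append_left
          rwa [List.nodup_reverse] at this
        rw [Walk.support_cons] at hqnd
        exact (List.nodup_cons.1 hqnd).1 q2.end_mem_support
  · push_neg at hmem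
    have hall : ∀ x ∈ c.support, ∃ a, x = Sum.inl a := by
      intro x hx
      cases x with
      | inl a => exact ⟨a, rfl⟩
      | inr e => exact absurd hx (hmem e)
    obtain ⟨a, hva⟩ := hall v c.start_mem_support
    subst hva
    obtain ⟨w', hsupp, hedges⟩ := leafExt_proj c hall rfl rfl
    refine hT w' ⟨⟨⟨?_⟩, ?_⟩, ?_⟩
    · have := hc.edges_nodup
      rw [← hedges] at this
      exact this.of_map _
    · intro hnil
      have h3 := hc.three_le_length
      have : c.edges.length = 0 := by rw [← hedges, hnil]; simp
      rw [Walk.length_edges] at this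
      omega
    · have := hc.support_nodup
      have hmap : w'.support.tail.map Sum.inl = c.support.tail := by
        rw [← hsupp, List.map_tail]
      rw [← hmap] at this
      exact this.of_map _

lemma leafExt_isTree (hT : T.IsTree) (f : ε → ι) : (leafExt T f).IsTree :=
  ⟨leafExt_connected hT.isConnected, leafExt_isAcyclic hT.IsAcyclic⟩

end LeafExt
end TWAux

open TWAux in
/-- Every "clique-like" finite set (any two members share a bag) is contained in one bag. -/
lemma exists_bag_superset {V' : Type} {G : SimpleGraph V'} {ι : Type} (d : TreeDecomp G ι)
    (W : Finset V') (h : ∀ u ∈ W, ∀ v ∈ W, ∃ x, u ∈ d.bag x ∧ v ∈ d.bag x) :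
    ∃ x, ∀ u ∈ W, u ∈ d.bag x := by
  rcases W.eq_empty_or_nonempty with rfl | ⟨u0, hu0⟩
  · obtain ⟨x⟩ := d.isTree.isConnected.nonempty
    exact ⟨x, by simp⟩
  · have hmem : ∀ u ∈ W, {x : ι | u ∈ d.bag x} ∈ W.toList.map (fun u => {x : ι | u ∈ d.bag x}) :=
      fun u hu => List.mem_map.2 ⟨u, Finset.mem_toList.2 hu, rfl⟩
    obtain ⟨m, _, hm⟩ := helly_aux d.isTree (W.toList.map fun u => {x : ι | u ∈ d.bag x})
      {x : ι | u0 ∈ d.bag x} (d.subtree u0)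
      (by
        rintro S hS
        obtain ⟨u, hu, rfl⟩ := List.mem_map.1 hS
        exact d.subtree u)
      (by
        rintro S hS
        obtain ⟨u, hu, rfl⟩ := List.mem_map.1 hS
        obtain ⟨x, hx1, hx2⟩ := h u0 hu0 u (Finset.mem_toList.1 hu)
        exact ⟨x, hx1, hx2⟩)
      (by
        rintro S hS S' hS'
        obtain ⟨u, hu, rfl⟩ := List.mem_map.1 hS
        obtain ⟨u', hu', rfl⟩ := List.mem_map.1 hS'
        obtain ⟨x, hx1, hx2⟩ := h u (Finset.mem_toList.1 hu) u' (Finset.mem_toList.1 hu')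
        exact ⟨x, hx1, hx2⟩)
    exact ⟨m, fun u hu => hm _ (hmem u hu)⟩

/-- The treewidth-defining set is nonempty for any graph over `Fin M`. -/
lemma treewidth_set_nonempty {M : ℕ} (G : SimpleGraph (Fin M)) :
    {n : ℕ | ∃ (ι : Type) (d : TreeDecomp G ι),
      ∀ x : ι, ∃ s : Finset (Fin M), ↑s = d.bag x ∧ s.card ≤ n + 1}.Nonempty := by
  refine ⟨M, Unit, ⟨⊥, ⟨?_, isAcyclic_bot⟩, fun _ => Set.univ, fun v => ⟨(), trivial⟩,
    fun u v _ => ⟨(), trivial, trivial⟩, fun v => ?_⟩, fun _ => ⟨Finset.univ, by simp, by simp⟩⟩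
  · rw [SimpleGraph.connected_iff]
    exact ⟨fun a b => by rw [Subsingleton.elim a b], ⟨()⟩⟩
  · rw [SimpleGraph.connected_iff]
    refine ⟨fun a b => by rw [Subsingleton.elim a b], ⟨⟨(), trivial⟩⟩⟩

open TWAux in
/-- `tw(B(𝔊)) ≤ tw(I(𝔊)) + 1` for any group model. -/
theorem treewidth_incidence_le_treewidth_intersection_add_one
    {N M : ℕ} (Gr : Fin M → Finset (Fin N))
    (hcover : ∀ i : Fin N, ∃ j : Fin M, i ∈ Gr j) :
    treewidth (incidenceGraph Gr) ≤ treewidth (intersectionGraph Gr) + 1 := by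
  classical
  have hw : treewidth (intersectionGraph Gr) ∈ {n : ℕ | ∃ (ι : Type)
      (d : TreeDecomp (intersectionGraph Gr) ι),
      ∀ x : ι, ∃ s : Finset (Fin M), ↑s = d.bag x ∧ s.card ≤ n + 1} :=
    Nat.sInf_mem (treewidth_set_nonempty (intersectionGraph Gr))
  obtain ⟨ι, d, hbags⟩ := hw
  choose s hs hcard using hbags
  -- for each element, a bag containing all groups containing it
  have hcl : ∀ e : Fin N, ∃ x : ι, ∀ g : Fin M, e ∈ Gr g → g ∈ d.bag x := by
    intro e
    have := exists_bag_superset d (Finset.univ.filter (fun g => e ∈ Gr g)) ?_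
    · obtain ⟨x, hx⟩ := this
      exact ⟨x, fun g hg => hx g (by simp [hg])⟩
    · intro u hu v hv
      rw [Finset.mem_filter] at hu hv
      rcases eq_or_ne u v with rfl | hne
      · obtain ⟨x, hx⟩ := d.covers u
        exact ⟨x, hx, hx⟩
      · have hadj : (intersectionGraph Gr).Adj u v := by
          rw [intersectionGraph, SimpleGraph.fromRel_adj]
          exact ⟨hne, Or.inl ⟨e, Finset.mem_inter.2 ⟨hu.2, hv.2⟩⟩⟩
        exact d.coversEdge hadj
  choose xe hxe using hcl
  -- the bags of the new decomposition
  set bag' : ι ⊕ Fin N → Set (Fin N ⊕ Fin M) :=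
    Sum.elim (fun x => Sum.inr '' d.bag x)
      (fun e => insert (Sum.inl e) (Sum.inr '' d.bag (xe e))) with hbag'
  have hbagl : ∀ x : ι, bag' (Sum.inl x) = Sum.inr '' d.bag x := fun _ => rfl
  have hbagr : ∀ e : Fin N,
      bag' (Sum.inr e) = insert (Sum.inl e) (Sum.inr '' d.bag (xe e)) := fun _ => rfl
  -- membership facts
  have hmem_inl : ∀ (g : Fin M) (x : ι), Sum.inr g ∈ bag' (Sum.inl x) ↔ g ∈ d.bag x := by
    intro g x
    rw [hbagl]
    constructor
    · rintro ⟨g', hg', hgg⟩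
      obtain rfl : g' = g := Sum.inr_injective hgg
      exact hg'
    · intro hg; exact ⟨g, hg, rfl⟩
  have hmem_inr : ∀ (g : Fin M) (e : Fin N),
      Sum.inr g ∈ bag' (Sum.inr e) ↔ g ∈ d.bag (xe e) := by
    intro g e
    rw [hbagr, Set.mem_insert_iff]
    constructor
    · rintro (h | ⟨g', hg', hgg⟩)
      · exact absurd h (by simp)
      · obtain rfl : g' = g := Sum.inr_injective hgg
        exact hg'
    · intro hg; exact Or.inr ⟨g, hg, rfl⟩
  -- conclude via the leaf-extension decomposition
  refine Nat.sInf_le ⟨ι ⊕ Fin N,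
    ⟨leafExt d.tree xe, leafExt_isTree d.isTree xe, bag', ?_, ?_, ?_⟩, ?_⟩
  · -- covers
    rintro (e | g)
    · exact ⟨Sum.inr e, by rw [hbagr]; exact Set.mem_insert _ _⟩
    · obtain ⟨x, hx⟩ := d.covers g
      exact ⟨Sum.inl x, (hmem_inl g x).2 hx⟩
  · -- coversEdge
    rintro u v hadj
    rw [incidenceGraph, SimpleGraph.fromRel_adj] at hadj
    obtain ⟨hne, h | h⟩ := hadj
    · rcases u with e | g <;> rcases v with e' | g'
      · exact h.elim
      · refine ⟨Sum.inr e, by rw [hbagr]; exact Set.mem_insert _ _,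
          (hmem_inr g' e).2 (hxe e g' h)⟩
      · exact h.elim
      · exact h.elim
    · rcases u with e | g <;> rcases v with e' | g'
      · exact h.elim
      · exact h.elim
      · refine ⟨Sum.inr e', (hmem_inr g e').2 (hxe e' g h),
          by rw [hbagr]; exact Set.mem_insert _ _⟩
      · exact h.elim
  · -- subtree condition
    rintro (e | g)
    · -- an element: its bags form the singleton {Sum.inr e}
      have hset : {y : ι ⊕ Fin N | Sum.inl e ∈ bag' y} = {Sum.inr e} := by
        ext y
        rcases y with x | e'
        · simp only [Set.mem_setOf_eq, hbagl, Set.mem_image, Set.mem_singleton_iff]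
          constructor
          · rintro ⟨g', _, h⟩; exact absurd h (by simp)
          · intro h; exact absurd h (by simp)
        · simp only [Set.mem_setOf_eq, hbagr, Set.mem_insert_iff, Set.mem_image,
            Set.mem_singleton_iff]
          constructor
          · rintro (h | ⟨g', _, h⟩)
            · rw [Sum.inl_injective h]
            · exact absurd h (by simp)
          · intro h
            exact Or.inl (by rw [Sum.inr_injective h])
      rw [hset, SimpleGraph.connected_iff]
      refine ⟨?_, ⟨⟨Sum.inr e, rfl⟩⟩⟩
      rintro ⟨a, ha⟩ ⟨b, hb⟩
      rw [Set.mem_singleton_iff] at ha hb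
      subst ha; subst hb
      rfl
    · -- a group
      set S' : Set (ι ⊕ Fin N) := {y | Sum.inr g ∈ bag' y} with hS'
      obtain ⟨x0, hx0⟩ := d.covers g
      have hx0' : Sum.inl x0 ∈ S' := (hmem_inl g x0).2 hx0
      have key : ∀ (x : ι) (hx : Sum.inl x ∈ S'),
          ((leafExt d.tree xe).induce S').Reachable ⟨Sum.inl x, hx⟩ ⟨Sum.inl x0, hx0'⟩ := by
        intro x hx
        have hxg : g ∈ d.bag x := (hmem_inl g x).1 hx
        have hreach := (d.subtree g).preconnected ⟨x, hxg⟩ ⟨x0, hx0⟩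
        obtain ⟨p, hp⟩ := exists_walk_of_reachable_induce hreach
        have hmap : ∀ a ∈ (p.map (leafExtHom d.tree xe)).support, a ∈ S' := by
          intro a ha
          rw [SimpleGraph.Walk.support_map] at ha
          obtain ⟨a', ha', rfl⟩ := List.mem_map.1 ha
          exact (hmem_inl g a').2 (hp a' ha')
        exact reachable_induce_of_walk _ hmap _ _
      rw [SimpleGraph.connected_iff]
      refine ⟨?_, ⟨⟨Sum.inl x0, hx0'⟩⟩⟩
      have key2 : ∀ (y : S'),
          ((leafExt d.tree xe).induce S').Reachable y ⟨Sum.inl x0, hx0'⟩ := by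
        rintro ⟨y, hy⟩
        rcases y with x | e
        · exact key x hy
        · have hg : g ∈ d.bag (xe e) := (hmem_inr g e).1 hy
          have hxe' : Sum.inl (xe e) ∈ S' := (hmem_inl g (xe e)).2 hg
          have hadj0 : (leafExt d.tree xe).Adj (Sum.inr e) (Sum.inl (xe e)) :=
            leafExt_adj_inr.2 rfl
          have hadj : ((leafExt d.tree xe).induce S').Adj ⟨Sum.inr e, hy⟩
              ⟨Sum.inl (xe e), hxe'⟩ := hadj0
          exact hadj.reachable.trans (key (xe e) hxe')
      intro a b
      exact (key2 a).trans (key2 b).symm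
  · -- bag size bound
    rintro (x | e)
    · refine ⟨(s x).image Sum.inr, ?_, ?_⟩
      · rw [Finset.coe_image, hs]; rfl
      · exact le_trans (Finset.card_image_le (f := (Sum.inr : Fin M → Fin N ⊕ Fin M)) (s := s x)) (le_trans (hcard x) (by omega))
    · refine ⟨insert (Sum.inl e) ((s (xe e)).image Sum.inr), ?_, ?_⟩
      · rw [Finset.coe_insert, Finset.coe_image, hs]; rfl
      · refine le_trans (Finset.card_insert_le _ _) ?_
        have := le_trans (Finset.card_image_le (f := (Sum.inr : Fin M → Fin N ⊕ Fin M)) (s := s (xe e))) (hcard (xe e))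
        omega
end

section
/- For every natural number t there exists a group model 𝔊 such that tw(I(𝔊)) − tw(B(𝔊)) = t. In particular, for 𝔊 = {G_i : i ∈ [t+2]} with G_i = {i, t+3}, the incidence graph B(𝔊) is a tree (so tw(B(𝔊)) = 1) while the intersection graph I(𝔊) is a clique on t+2 vertices (so tw(I(𝔊)) = t+1). -/
open SimpleGraph

/-- The "star" group model on ground set `[t+3]` with groups `G_i = {i, t+3}`
(in 0-indexed terms `{i, t+2}`), `i ∈ [t+2]`. -/
def starModel (t : ℕ) : Fin (t + 2) → Finset (Fin (t + 3)) :=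
  fun i => {Fin.castLE (by omega) i, ⟨t + 2, by omega⟩}

/-! ### Auxiliary lemmas -/

section ParentTree

variable {ι : Type}

/-- A graph whose adjacency comes from a rank-decreasing parent map is a tree. -/
lemma isTree_of_parent (T : SimpleGraph ι) (r : ι) (p : ι → ι) (rank : ι → ℕ)
    (hadj : ∀ x y, T.Adj x y ↔ (x ≠ r ∧ p x = y) ∨ (y ≠ r ∧ p y = x))
    (hrank : ∀ x, x ≠ r → rank (p x) < rank x) : T.IsTree := by
  have hreach : ∀ n (x : ι), rank x < n → T.Reachable x r := by
    intro n
    induction n with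
    | zero => intro x hx; omega
    | succ n ih =>
      intro x hx
      by_cases hxr : x = r
      · subst hxr; exact Reachable.refl _
      · have hadjx : T.Adj x (p x) := (hadj x (p x)).2 (Or.inl ⟨hxr, rfl⟩)
        exact hadjx.reachable.trans (ih (p x) (by have := hrank x hxr; omega))
  haveI : Nonempty ι := ⟨r⟩
  constructor
  · exact Connected.mk (fun u v =>
      ((hreach (rank u + 1) u (by omega)).trans (hreach (rank v + 1) v (by omega)).symm))
  · intro v c hc
    classical
    obtain ⟨m, hmmem, hmax⟩ := c.support.toFinset.exists_max_image rank
      ⟨v, by simp [Walk.start_mem_support]⟩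
    rw [List.mem_toFinset] at hmmem
    have hmax' : ∀ y ∈ c.support, rank y ≤ rank m := by
      intro y hy; exact hmax y (List.mem_toFinset.mpr hy)
    have main : ∀ (c0 : T.Walk m m), c0.IsCycle → List.Perm c0.edges c.edges → False := by
      intro c0 hc0 hperm
      have claim : ∀ y : ι, s(m, y) ∈ c0.edges → y = p m := by
        intro y he
        have he' : s(m, y) ∈ c.edges := hperm.mem_iff.1 he
        have hadjmy : T.Adj m y := c0.edges_subset_edgeSet he
        rcases (hadj m y).1 hadjmy with ⟨_, hpm⟩ | ⟨hyr, hpy⟩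
        · exact hpm.symm
        · exfalso
          have h1 : rank m < rank y := by rw [← hpy]; exact hrank y hyr
          have h2 : y ∈ c.support := c.snd_mem_support_of_mem_edges he'
          have := hmax' y h2
          omega
      cases c0 with
      | nil => exact hc0.ne_nil rfl
      | cons h q =>
        rename_i y
        have hy : y = p m := claim y (by simp [Walk.edges_cons])
        have hlen : 3 ≤ (Walk.cons h q).length := hc0.three_le_length
        cases hq : q.reverse with
        | nil =>
          have : q = Walk.nil := by
            have := congrArg Walk.reverse hq
            simpa using this
          subst this
          simp [Walk.length_cons] at hlen
        | cons h2 q2 =>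
          rename_i z
          have hz : s(m, z) ∈ q.edges := by
            have : s(m, z) ∈ q.reverse.edges := by simp [hq, Walk.edges_cons]
            rwa [Walk.edges_reverse, List.mem_reverse] at this
          have hz' : z = p m := claim z (by simp [Walk.edges_cons]; right; exact hz)
          have hnodup : (Walk.cons h q).edges.Nodup := hc0.edges_nodup
          rw [Walk.edges_cons, List.nodup_cons] at hnodup
          have hyz : y = z := by rw [hy, hz']
          exact hnodup.1 (hyz ▸ hz)
    exact main (c.rotate m hmmem) (hc.rotate hmmem) (c.rotate_edges m hmmem).perm

end ParentTree

section TreePath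

variable {ι : Type} {T : SimpleGraph ι}

/-- The unique path between two vertices of a tree. -/
noncomputable def tpath (hT : T.IsTree) (a b : ι) : T.Walk a b :=
  (hT.existsUnique_path a b).exists.choose

lemma tpath_isPath (hT : T.IsTree) (a b : ι) : (tpath hT a b).IsPath :=
  (hT.existsUnique_path a b).exists.choose_spec

lemma tpath_unique (hT : T.IsTree) {a b : ι} (q : T.Walk a b) (hq : q.IsPath) :
    q = tpath hT a b := by
  obtain ⟨p, _, hup⟩ := hT.existsUnique_path a b
  rw [hup q hq, hup (tpath hT a b) (tpath_isPath hT a b)]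

/-- A set is path-closed if it contains the unique path between any two members. -/
def PathClosed (hT : T.IsTree) (S : Set ι) : Prop :=
  ∀ a ∈ S, ∀ b ∈ S, ∀ x ∈ (tpath hT a b).support, x ∈ S

lemma pathClosed_inter (hT : T.IsTree) {A B : Set ι} (hA : PathClosed hT A)
    (hB : PathClosed hT B) : PathClosed hT (A ∩ B) :=
  fun a ha b hb x hx => ⟨hA a ha.1 b hb.1 x hx, hB a ha.2 b hb.2 x hx⟩

lemma pathClosed_of_induce_connected (hT : T.IsTree) (S : Set ι)
    (hS : (T.induce S).Connected) : PathClosed hT S := by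
  classical
  intro a ha b hb x hx
  obtain ⟨w⟩ := hS ⟨a, ha⟩ ⟨b, hb⟩
  have hw : ∀ y ∈ (w.map (Embedding.induce S).toHom).support, y ∈ S := by
    intro y hy
    rw [Walk.support_map, List.mem_map] at hy
    obtain ⟨⟨z, hz⟩, _, rfl⟩ := hy
    exact hz
  have hb' := (w.map (Embedding.induce S).toHom).bypass_isPath
  have heq : (w.map (Embedding.induce S).toHom).bypass = tpath hT a b :=
    tpath_unique hT _ hb'
  rw [← heq] at hx
  exact hw x (Walk.support_bypass_subset _ hx)

lemma exists_boundary {a c : ι} (r : T.Walk a c) (S : Set ι) (hc : c ∈ S) :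
    ∃ m, m ∈ S ∧ m ∈ r.support ∧
      (m = a ∨ ∃ x, T.Adj x m ∧ x ∈ r.support ∧ x ∉ S) := by
  classical
  induction r with
  | nil => exact ⟨_, hc, by simp, Or.inl rfl⟩
  | cons h r' ih =>
    rename_i u u' w
    by_cases hu : u ∈ S
    · exact ⟨u, hu, by simp, Or.inl rfl⟩
    · obtain ⟨m, hmS, hmsup, hm⟩ := ih hc
      refine ⟨m, hmS, by simp [Walk.support_cons]; right; exact hmsup, Or.inr ?_⟩
      rcases hm with rfl | ⟨x, hx1, hx2, hx3⟩
      · exact ⟨u, h, by simp, hu⟩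
      · exact ⟨x, hx1, by simp [Walk.support_cons]; right; exact hx2, hx3⟩

lemma median (hT : T.IsTree) (a b c : ι) :
    ∃ m, m ∈ (tpath hT a b).support ∧ m ∈ (tpath hT b c).support ∧
      m ∈ (tpath hT a c).support := by
  classical
  set p := tpath hT a b with hp
  set q := tpath hT b c with hq
  set r := tpath hT a c with hr
  have hrsub : ∀ x ∈ r.support, x ∈ p.support ∨ x ∈ q.support := by
    intro x hx
    have h1 : (p.append q).bypass = r :=
      (tpath_unique hT _ (p.append q).bypass_isPath).symm ▸ rfl
    rw [← h1] at hx
    have := Walk.support_bypass_subset _ hx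
    rw [Walk.mem_support_append_iff] at this
    exact this
  obtain ⟨m, hmS, hmr, hm⟩ := exists_boundary r {x | x ∈ q.support}
    (Walk.end_mem_support q)
  rcases hm with rfl | ⟨x, hxadj, hxr, hxq⟩
  · exact ⟨m, Walk.start_mem_support p, hmS, hmr⟩
  · have hxp : x ∈ p.support := by
      rcases hrsub x hxr with h | h
      · exact h
      · exact absurd h hxq
    have hqm : m ∈ q.support := hmS
    set qm := (q.takeUntil m hqm).reverse with hqmdef
    have hqm_path : qm.IsPath := ((tpath_isPath hT b c).takeUntil hqm).reverse
    have hqm_sub : ∀ y ∈ qm.support, y ∈ q.support := by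
      intro y hy
      rw [hqmdef, Walk.support_reverse, List.mem_reverse] at hy
      exact Walk.support_takeUntil_subset _ hqm hy
    have hw1 : (Walk.cons hxadj qm).IsPath := by
      rw [Walk.cons_isPath_iff]
      exact ⟨hqm_path, fun hmem => hxq (hqm_sub x hmem)⟩
    have hdrop : (p.dropUntil x hxp).IsPath := (tpath_isPath hT a b).dropUntil hxp
    have heq : Walk.cons hxadj qm = p.dropUntil x hxp := by
      rw [tpath_unique hT _ hw1, tpath_unique hT _ hdrop]
    have hmp : m ∈ p.support := by
      have : m ∈ (Walk.cons hxadj qm).support := by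
        simp [Walk.support_cons, Walk.start_mem_support]
      rw [heq] at this
      exact Walk.support_dropUntil_subset _ hxp this
    exact ⟨m, hmp, hmS, hmr⟩

lemma helly3 (hT : T.IsTree) (A B C : Set ι)
    (hA : PathClosed hT A) (hB : PathClosed hT B) (hC : PathClosed hT C)
    (hAB : (A ∩ B).Nonempty) (hBC : (B ∩ C).Nonempty) (hAC : (A ∩ C).Nonempty) :
    (A ∩ B ∩ C).Nonempty := by
  obtain ⟨a, haA, haB⟩ := hAB
  obtain ⟨b, hbB, hbC⟩ := hBC
  obtain ⟨c, hcA, hcC⟩ := hAC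
  obtain ⟨m, hm1, hm2, hm3⟩ := median hT a b c
  exact ⟨m, ⟨hA a haA c hcA m hm3, hB a haB b hbB m hm1⟩, hC b hbC c hcC m hm2⟩

lemma helly (hT : T.IsTree) : ∀ (n : ℕ) (f : Fin (n+1) → Set ι),
    (∀ i, PathClosed hT (f i)) → (∀ i j, (f i ∩ f j).Nonempty) →
    (⋂ i, f i).Nonempty := by
  intro n
  induction n with
  | zero =>
    intro f hpc hpair
    obtain ⟨x, hx, -⟩ := hpair 0 0
    exact ⟨x, Set.mem_iInter.mpr fun i =>
      by rw [show i = 0 from Fin.ext (by omega)]; exact hx⟩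
  | succ n ih =>
    intro f hpc hpair
    classical
    set g : Fin (n+1) → Set ι := fun i =>
      if (i : ℕ) < n then f ⟨i, by omega⟩ else f ⟨n, by omega⟩ ∩ f ⟨n+1, by omega⟩
      with hg
    have hgpc : ∀ i, PathClosed hT (g i) := by
      intro i
      rw [hg]
      dsimp only
      split
      · exact hpc _
      · exact pathClosed_inter hT (hpc _) (hpc _)
    have key : ∀ (k : Fin (n+2)), ((f ⟨n, by omega⟩ ∩ f ⟨n+1, by omega⟩) ∩ f k).Nonempty := by
      intro k
      exact helly3 hT (f ⟨n, by omega⟩) (f ⟨n+1, by omega⟩) (f k)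
        (hpc _) (hpc _) (hpc _) (hpair _ _) (hpair _ _) (hpair _ _)
    have hgpair : ∀ i j, (g i ∩ g j).Nonempty := by
      intro i j
      rw [hg]; dsimp only
      split
      · split
        · exact hpair _ _
        · obtain ⟨x, hx1, hx2⟩ := key ⟨i, by omega⟩
          exact ⟨x, hx2, hx1⟩
      · split
        · obtain ⟨x, hx1, hx2⟩ := key ⟨j, by omega⟩
          exact ⟨x, hx1, hx2⟩
        · obtain ⟨x, hx, -⟩ := key ⟨n, by omega⟩
          exact ⟨x, hx, hx⟩
    obtain ⟨x, hx⟩ := ih g hgpc hgpair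
    rw [Set.mem_iInter] at hx
    refine ⟨x, Set.mem_iInter.mpr fun i => ?_⟩
    by_cases hi : (i : ℕ) < n
    · have := hx ⟨i, by omega⟩
      rw [hg] at this; dsimp only at this
      rw [if_pos (by simpa using hi)] at this
      have hie : (⟨(i:ℕ), by omega⟩ : Fin (n+2)) = i := Fin.ext rfl
      rwa [hie] at this
    · have := hx ⟨n, by omega⟩
      rw [hg] at this; dsimp only at this
      rw [if_neg (by simp)] at this
      obtain ⟨h1, h2⟩ := this
      have hcases : (i : ℕ) = n ∨ (i : ℕ) = n + 1 := by omega
      rcases hcases with h | h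
      · have hie : (⟨n, by omega⟩ : Fin (n+2)) = i := Fin.ext h.symm
        rwa [hie] at h1
      · have hie : (⟨n+1, by omega⟩ : Fin (n+2)) = i := Fin.ext h.symm
        rwa [hie] at h2

end TreePath

lemma sInf_eq_of_mem_of_le {S : Set ℕ} {k : ℕ} (h1 : k ∈ S) (h2 : ∀ n ∈ S, k ≤ n) :
    sInf S = k :=
  le_antisymm (Nat.sInf_le h1) (le_csInf ⟨k, h1⟩ h2)

/-! ### The incidence graph of the star model -/

section Incidence

variable (t : ℕ)

/-- The root of the incidence tree. -/
def IncRoot : Fin (t + 3) ⊕ Fin (t + 2) := Sum.inl ⟨t + 2, by omega⟩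

/-- The parent map for the incidence tree. -/
def IncParent : Fin (t + 3) ⊕ Fin (t + 2) → Fin (t + 3) ⊕ Fin (t + 2) := fun x =>
  match x with
  | Sum.inl e => if h : (e : ℕ) < t + 2 then Sum.inr ⟨e, h⟩ else Sum.inl ⟨t + 2, by omega⟩
  | Sum.inr _ => Sum.inl ⟨t + 2, by omega⟩

/-- The rank for the incidence tree. -/
def IncRank : Fin (t + 3) ⊕ Fin (t + 2) → ℕ := fun x =>
  match x with
  | Sum.inl e => if (e : ℕ) < t + 2 then 2 else 0
  | Sum.inr _ => 1

lemma inc_adj (x y : Fin (t + 3) ⊕ Fin (t + 2)) :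
    (incidenceGraph (starModel t)).Adj x y ↔
      (x ≠ IncRoot t ∧ IncParent t x = y) ∨ (y ≠ IncRoot t ∧ IncParent t y = x) := by
  have key : ∀ (e : Fin (t+3)) (g : Fin (t+2)),
      ((incidenceGraph (starModel t)).Adj (Sum.inl e) (Sum.inr g) ↔
        (Sum.inl e ≠ IncRoot t ∧ IncParent t (Sum.inl e) = Sum.inr g) ∨
        (Sum.inr g ≠ IncRoot t ∧ IncParent t (Sum.inr g) = Sum.inl e)) := by
    intro e g
    have hmem : e ∈ starModel t g ↔ ((e : ℕ) = (g : ℕ) ∨ (e : ℕ) = t + 2) := by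
      simp [starModel, Fin.ext_iff]
    simp only [incidenceGraph, fromRel_adj]
    constructor
    · rintro ⟨-, h | h⟩
      · replace h : e ∈ starModel t g := h
        rw [hmem] at h
        rcases h with h | h
        · left
          constructor
          · simp only [IncRoot, ne_eq, Sum.inl.injEq, Fin.ext_iff]
            omega
          · simp only [IncParent]
            rw [dif_pos (by omega : (e : ℕ) < t + 2)]
            exact congrArg Sum.inr (Fin.ext (by simpa using h))
        · right
          refine ⟨fun hc => by simp [IncRoot] at hc, ?_⟩
          simp only [IncParent]
          exact congrArg Sum.inl (Fin.ext (by simp; omega))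
      · exact (h : False).elim
    · rintro (⟨hne, hp⟩ | ⟨-, hp⟩)
      · have he : (e : ℕ) < t + 2 := by
          by_contra hcon
          exact hne (by
            unfold IncRoot
            exact congrArg Sum.inl (Fin.ext (by simp; omega)))
        simp only [IncParent] at hp
        rw [dif_pos he] at hp
        have hev : (e : ℕ) = (g : ℕ) := by
          have := Sum.inr.inj hp
          simpa [Fin.ext_iff] using this
        refine ⟨by simp, Or.inl ?_⟩
        show e ∈ starModel t g
        rw [hmem]
        exact Or.inl hev
      · simp only [IncParent] at hp
        have he : (e : ℕ) = t + 2 := by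
          have := Sum.inl.inj hp
          simpa [Fin.ext_iff] using this.symm
        refine ⟨by simp, Or.inl ?_⟩
        show e ∈ starModel t g
        rw [hmem]
        exact Or.inr he
  rcases x with e | g
  · rcases y with e' | g'
    · simp only [incidenceGraph, fromRel_adj]
      constructor
      · rintro ⟨-, h | h⟩ <;> exact (h : False).elim
      · rintro (⟨hne, hp⟩ | ⟨hne, hp⟩) <;>
        · exfalso
          simp only [IncParent] at hp
          split at hp
          · simp at hp
          · rename_i hh
            apply hne
            unfold IncRoot
            exact congrArg Sum.inl (Fin.ext (by simp; omega))
    · exact key e g'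
  · rcases y with e' | g'
    · rw [adj_comm, key e' g, or_comm]
    · simp only [incidenceGraph, fromRel_adj]
      constructor
      · rintro ⟨-, h | h⟩ <;> exact (h : False).elim
      · rintro (⟨hne, hp⟩ | ⟨hne, hp⟩) <;>
        · simp only [IncParent] at hp
          simp at hp

lemma inc_isTree : (incidenceGraph (starModel t)).IsTree := by
  apply isTree_of_parent _ (IncRoot t) (IncParent t) (IncRank t) (inc_adj t)
  intro x hx
  rcases x with e | g
  · by_cases he : (e : ℕ) < t + 2
    · simp only [IncParent, IncRank]
      rw [dif_pos he, if_pos he]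
      norm_num
    · exact absurd (by
        unfold IncRoot
        exact congrArg Sum.inl (Fin.ext (by simp; omega))) hx
  · simp only [IncParent, IncRank]
    rw [if_neg (by omega : ¬ (t + 2 : ℕ) < t + 2)]
    norm_num

end Incidence

/-- The tree decomposition of the incidence graph by the edges of the star tree. -/
noncomputable def incDecomp (t : ℕ) :
    TreeDecomp (incidenceGraph (starModel t)) (Fin (t + 3) ⊕ Fin (t + 2)) where
  tree := incidenceGraph (starModel t)
  isTree := inc_isTree t
  bag x := {x, IncParent t x}
  covers v := ⟨v, Or.inl rfl⟩
  coversEdge u v huv := by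
    rcases (inc_adj t u v).1 huv with ⟨-, hp⟩ | ⟨-, hp⟩
    · exact ⟨u, Or.inl rfl, Or.inr hp.symm⟩
    · exact ⟨v, Or.inr hp.symm, Or.inl rfl⟩
  subtree v := by
    have hroot : IncParent t (IncRoot t) = IncRoot t := by
      simp [IncParent, IncRoot]
    have hv : v ∈ {x | v ∈ ({x, IncParent t x} : Set _)} := Or.inl rfl
    have hstep : ∀ x (hx : x ∈ {x' | v ∈ ({x', IncParent t x'} : Set _)}),
        ((incidenceGraph (starModel t)).induce
          {x' | v ∈ ({x', IncParent t x'} : Set _)}).Reachable ⟨x, hx⟩ ⟨v, hv⟩ := by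
      intro x hx
      rcases hx with heq | heq
      · cases heq
        exact Reachable.refl _
      · by_cases hxv : x = v
        · subst hxv
          exact Reachable.refl _
        · have hxr : x ≠ IncRoot t := by
            intro hcon
            subst hcon
            rw [hroot] at heq
            exact hxv heq.symm
          have hadjxv : (incidenceGraph (starModel t)).Adj x v :=
            (inc_adj t x v).2 (Or.inl ⟨hxr, heq.symm⟩)
          exact (Adj.reachable (by exact hadjxv :
            ((incidenceGraph (starModel t)).induce
              {x' | v ∈ ({x', IncParent t x'} : Set _)}).Adj ⟨x, _⟩ ⟨v, hv⟩))
    haveI : Nonempty ({x | v ∈ ({x, IncParent t x} : Set _)} :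
        Set (Fin (t + 3) ⊕ Fin (t + 2))) := ⟨⟨v, hv⟩⟩
    exact Connected.mk fun a b =>
      ((hstep a.1 a.2).trans (hstep b.1 b.2).symm)

/-- The trivial one-bag tree decomposition of the intersection graph. -/
noncomputable def unitDecomp (t : ℕ) :
    TreeDecomp (intersectionGraph (starModel t)) Unit where
  tree := ⊥
  isTree := by
    constructor
    · exact Connected.mk fun u v => by rw [Subsingleton.elim u v]
    · intro v c hc
      cases c with
      | nil => exact hc.ne_nil rfl
      | cons h q => exact h.elim
  bag _ := Set.univ
  covers v := ⟨(), trivial⟩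
  coversEdge u v _ := ⟨(), trivial, trivial⟩
  subtree v := by
    haveI : Nonempty ({x : Unit | v ∈ Set.univ} : Set Unit) := ⟨⟨(), trivial⟩⟩
    exact Connected.mk fun a b => by rw [Subsingleton.elim a b]

/-- for every `t` there is a group model whose incidence graph has
treewidth `1` while its intersection graph has treewidth `t + 1`; in particular the
difference of the two treewidths is exactly `t`. -/
theorem treewidth_gap_example (t : ℕ) :
    treewidth (incidenceGraph (starModel t)) = 1 ∧
    treewidth (intersectionGraph (starModel t)) = t + 1 ∧
    treewidth (intersectionGraph (starModel t)) -
      treewidth (incidenceGraph (starModel t)) = t := by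
  have hB : treewidth (incidenceGraph (starModel t)) = 1 := by
    apply sInf_eq_of_mem_of_le
    · refine ⟨_, incDecomp t, fun x => ⟨{x, IncParent t x}, by simp [incDecomp], ?_⟩⟩
      exact (Finset.card_insert_le _ _).trans (by simp)
    · rintro n ⟨ι, d, h⟩
      have hedge : (incidenceGraph (starModel t)).Adj
          (Sum.inl ⟨t + 2, by omega⟩) (Sum.inr 0) :=
        (inc_adj t _ _).2 (Or.inr ⟨by simp [IncRoot], rfl⟩)
      obtain ⟨x, hu, hv⟩ := d.coversEdge hedge
      obtain ⟨s, hs, hcard⟩ := h x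
      have hus : Sum.inl (⟨t + 2, by omega⟩ : Fin (t + 3)) ∈ s := by
        rw [← Finset.mem_coe, hs]; exact hu
      have hvs : (Sum.inr 0 : Fin (t + 3) ⊕ Fin (t + 2)) ∈ s := by
        rw [← Finset.mem_coe, hs]; exact hv
      have : 1 < s.card := Finset.one_lt_card.mpr ⟨_, hus, _, hvs, by simp⟩
      omega
  have hI : treewidth (intersectionGraph (starModel t)) = t + 1 := by
    apply sInf_eq_of_mem_of_le
    · refine ⟨Unit, unitDecomp t, fun x => ⟨Finset.univ, by simp [unitDecomp], ?_⟩⟩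
      simp
    · rintro n ⟨ι, d, h⟩
      set f : Fin (t + 2) → Set ι := fun v => {x | v ∈ d.bag x} with hf
      have hpc : ∀ i, PathClosed d.isTree (f i) := fun i =>
        pathClosed_of_induce_connected d.isTree _ (d.subtree i)
      have hpair : ∀ i j, (f i ∩ f j).Nonempty := by
        intro i j
        by_cases hij : i = j
        · subst hij
          obtain ⟨x, hx⟩ := d.covers i
          exact ⟨x, hx, hx⟩
        · have hadj : (intersectionGraph (starModel t)).Adj i j := by
            refine ⟨hij, Or.inl ⟨⟨t + 2, by omega⟩, ?_⟩⟩
            rw [Finset.mem_inter]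
            constructor <;> simp [starModel]
          obtain ⟨x, hx1, hx2⟩ := d.coversEdge hadj
          exact ⟨x, hx1, hx2⟩
      obtain ⟨x, hx⟩ := helly d.isTree (t + 1) f hpc hpair
      rw [Set.mem_iInter] at hx
      obtain ⟨s, hs, hcard⟩ := h x
      have hall : ∀ v : Fin (t + 2), v ∈ s := by
        intro v
        rw [← Finset.mem_coe, hs]
        exact hx v
      have hsub : (Finset.univ : Finset (Fin (t + 2))) ⊆ s := fun v _ => hall v
      have := Finset.card_le_card hsub
      simp at this
      omega
  exact ⟨hB, hI, by omega⟩
end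

section
/- Let A be the adjacency matrix of a (k, d, ε)-expander graph. Then for every k-sparse vector x ∈ ℝ^N: (1 − 2ε) d ‖x‖₁ ≤ ‖Ax‖₁ ≤ d ‖x‖₁. -/
open Finset

private lemma abel_bound (B : ℝ) : ∀ (s : ℕ) (a c : ℕ → ℝ),
    (∀ t, t < s → 0 ≤ c t) →
    (∀ t u, t ≤ u → u < s → a u ≤ a t) →
    (∀ t, t < s → 0 ≤ a t) →
    (∀ t, t ≤ s → ∑ u ∈ range t, c u ≤ B * t) →
    ∑ t ∈ range s, c t * a t ≤ B * ∑ t ∈ range s, a t := by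
  intro s
  induction s with
  | zero => intro a c _ _ _ _; simp
  | succ s ih =>
    intro a c hc ha ha0 hpre
    have key : ∑ t ∈ range s, c t * (a t - a s) ≤ B * ∑ t ∈ range s, (a t - a s) := by
      apply ih (fun t => a t - a s) c
      · intro t ht; exact hc t (Nat.lt_succ_of_lt ht)
      · intro t u htu hu; have := ha t u htu (Nat.lt_succ_of_lt hu); linarith
      · intro t ht; have := ha t s (le_of_lt ht) (Nat.lt_succ_self s); linarith
      · intro t ht; exact hpre t (le_trans ht (Nat.le_succ s))
    have has : 0 ≤ a s := ha0 s (Nat.lt_succ_self s)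
    have h1 : ∑ t ∈ range (s+1), c t * a t
        = ∑ t ∈ range s, c t * (a t - a s) + (∑ t ∈ range (s+1), c t) * a s := by
      rw [Finset.sum_mul]
      rw [Finset.sum_range_succ (fun t => c t * a s)]
      rw [show (∑ t ∈ range s, c t * (a t - a s)) + (∑ t ∈ range s, c t * a s + c s * a s)
          = ∑ t ∈ range s, (c t * (a t - a s) + c t * a s) + c s * a s by
        rw [Finset.sum_add_distrib]; ring]
      rw [Finset.sum_range_succ]
      congr 1
      apply Finset.sum_congr rfl; intro t _; ring
    have h2 : (∑ t ∈ range (s+1), c t) * a s ≤ B * (s+1) * a s := by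
      apply mul_le_mul_of_nonneg_right _ has
      have := hpre (s+1) le_rfl
      push_cast at this; linarith
    have h3 : B * ∑ t ∈ range s, (a t - a s) + B * (s+1) * a s = B * ∑ t ∈ range (s+1), a t := by
      rw [Finset.sum_sub_distrib, Finset.sum_const, Finset.card_range, Finset.sum_range_succ]
      push_cast; ring
    linarith

/-- RIP-1 for adjacency matrices of `(k, d, ε)`-expander graphs:
for every `k`-sparse `x`, `(1 − 2ε) d ‖x‖₁ ≤ ‖Ax‖₁ ≤ d ‖x‖₁`. -/
theorem expander_rip1
    {N m k d : ℕ} (ε : ℝ) (hε0 : 0 < ε) (hε : ε < 1 / 2)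
    (E : Fin N → Fin m → Prop) [∀ i j, Decidable (E i j)]
    (hdeg : ∀ i : Fin N, (Finset.univ.filter (fun j => E i j)).card = d)
    (hexpander : ∀ S : Finset (Fin N), S.card ≤ k →
      (1 - ε) * d * (S.card : ℝ) ≤
        ((S.biUnion (fun i => Finset.univ.filter (fun j => E i j))).card : ℝ))
    (x : Fin N → ℝ)
    (hx : (Finset.univ.filter (fun i => x i ≠ 0)).card ≤ k) :
    (1 - 2 * ε) * d * (∑ i, |x i|) ≤
        ∑ j, |∑ i, (if E i j then (1 : ℝ) else 0) * x i| ∧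
      ∑ j, |∑ i, (if E i j then (1 : ℝ) else 0) * x i| ≤ d * ∑ i, |x i| := by
  classical
  set S : Finset (Fin N) := Finset.univ.filter (fun i => x i ≠ 0) with hSdef
  have hinner : ∀ j, (∑ i, (if E i j then (1 : ℝ) else 0) * x i)
      = ∑ i, (if E i j then x i else 0) := by
    intro j; apply Finset.sum_congr rfl; intro i _
    by_cases h : E i j <;> simp [h]
  -- Upper bound
  have upper : ∑ j, |∑ i, (if E i j then (1 : ℝ) else 0) * x i| ≤ d * ∑ i, |x i| := by
    have h1 : ∀ j, |∑ i, (if E i j then (1 : ℝ) else 0) * x i|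
        ≤ ∑ i, (if E i j then |x i| else 0) := by
      intro j
      rw [hinner j]
      refine (Finset.abs_sum_le_sum_abs _ _).trans_eq ?_
      apply Finset.sum_congr rfl; intro i _
      by_cases h : E i j <;> simp [h]
    calc ∑ j, |∑ i, (if E i j then (1 : ℝ) else 0) * x i|
        ≤ ∑ j, ∑ i, (if E i j then |x i| else 0) := Finset.sum_le_sum (fun j _ => h1 j)
      _ = ∑ i, ∑ j, (if E i j then |x i| else 0) := Finset.sum_comm
      _ = ∑ i : Fin N, (d : ℝ) * |x i| := by
          apply Finset.sum_congr rfl; intro i _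
          rw [← Finset.sum_filter, Finset.sum_const, hdeg i, nsmul_eq_mul]
      _ = d * ∑ i, |x i| := by rw [Finset.mul_sum]
  refine ⟨?_, upper⟩
  -- Lower bound
  by_cases hs0 : S = ∅
  · have hx0 : ∀ i, x i = 0 := by
      intro i
      by_contra h
      have : i ∈ S := by simp [hSdef, h]
      simp [hs0] at this
    simp [hx0]
  obtain ⟨i0, hi0⟩ := Finset.nonempty_of_ne_empty hs0
  set s : ℕ := S.card with hs
  set le : Fin N → Fin N → Bool := fun i i' => decide (|x i'| ≤ |x i|) with hle
  set L : List (Fin N) := S.toList.mergeSort le with hL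
  have hperm : L.Perm S.toList := List.mergeSort_perm _ _
  have hlen : L.length = s := by rw [hperm.length_eq, Finset.length_toList]
  have hnodup : L.Nodup := hperm.nodup_iff.mpr S.nodup_toList
  have hmemL : ∀ i, i ∈ L ↔ i ∈ S := by
    intro i; rw [hperm.mem_iff, Finset.mem_toList]
  have hsorted : List.Pairwise (fun a b => |x b| ≤ |x a|) L := by
    have := List.pairwise_mergeSort (le := le)
      (fun a b c hab hbc => by
        simp only [hle, decide_eq_true_iff] at *; exact le_trans hbc hab)
      (fun a b => by
        simp only [hle, Bool.or_eq_true, decide_eq_true_iff]; exact le_total _ _)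
      S.toList
    exact this.imp (fun h => by simpa [hle, decide_eq_true_iff] using h)
  set f : ℕ → Fin N := fun t => L.getD t i0 with hf
  have hfget : ∀ t, t < s → ∀ (h : t < L.length), f t = L[t] := by
    intro t ht h; simp only [hf]; exact List.getD_eq_getElem L i0 h
  have hflt : ∀ t, t < s → t < L.length := fun t ht => by rwa [hlen]
  have hfS : ∀ t, t < s → f t ∈ S := by
    intro t ht
    rw [hfget t ht (hflt t ht), ← hmemL]
    exact List.getElem_mem _
  have hanti : ∀ t u, t ≤ u → u < s → |x (f u)| ≤ |x (f t)| := by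
    intro t u htu hu
    rcases eq_or_lt_of_le htu with rfl | hlt
    · exact le_rfl
    · rw [hfget u hu (hflt u hu), hfget t (lt_trans hlt hu) (hflt t (lt_trans hlt hu))]
      exact List.pairwise_iff_getElem.mp hsorted t u _ _ hlt
  have hinj : Set.InjOn f (Finset.range s : Set ℕ) := by
    intro t ht u hu he
    simp only [Finset.coe_range, Set.mem_Iio] at ht hu
    rw [hfget t ht (hflt t ht), hfget u hu (hflt u hu)] at he
    exact (hnodup.getElem_inj_iff).mp he
  set Nb : Fin N → Finset (Fin m) := fun i => Finset.univ.filter (fun j => E i j) with hNb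
  set P : ℕ → Finset (Fin N) := fun t => (Finset.range t).image f with hP
  set c : ℕ → ℕ := fun t => (Nb (f t) ∩ (P t).biUnion Nb).card with hc
  set a : ℕ → ℝ := fun t => |x (f t)| with ha
  have hPcard : ∀ t, t ≤ s → (P t).card = t := by
    intro t ht
    rw [hP]
    rw [Finset.card_image_of_injOn (fun u hu v hv he => hinj
      (by simp only [Finset.coe_range, Set.mem_Iio]; exact lt_of_lt_of_le (Finset.mem_range.mp hu) ht)
      (by simp only [Finset.coe_range, Set.mem_Iio]; exact lt_of_lt_of_le (Finset.mem_range.mp hv) ht) he)]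
    exact Finset.card_range t
  have himage : P s = S := by
    apply Finset.eq_of_subset_of_card_le
    · intro i hi
      simp only [hP, Finset.mem_image, Finset.mem_range] at hi
      obtain ⟨t, ht, rfl⟩ := hi
      exact hfS t ht
    · rw [hPcard s le_rfl]
  -- Claim A : counting collisions
  have claimA : ∀ t, t ≤ s → (((P t).biUnion Nb).card + ∑ u ∈ Finset.range t, c u = d * t) := by
    intro t
    induction t with
    | zero => intro _; simp [hP]
    | succ t ih =>
      intro ht
      have ht' : t ≤ s := le_trans (Nat.le_succ t) ht
      have hPsucc : P (t+1) = insert (f t) (P t) := by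
        rw [hP]; simp [Finset.range_add_one, Finset.image_insert]
      have hbU : (P (t+1)).biUnion Nb = Nb (f t) ∪ (P t).biUnion Nb := by
        rw [hPsucc, Finset.biUnion_insert]
      have hcard := Finset.card_union_add_card_inter (Nb (f t)) ((P t).biUnion Nb)
      rw [Finset.sum_range_succ, hbU, Nat.mul_succ]
      have hNbd : (Nb (f t)).card = d := hdeg (f t)
      have hct : c t = (Nb (f t) ∩ (P t).biUnion Nb).card := rfl
      have := ih ht'
      omega
  -- expansion bound on prefix collision counts
  have hexp : ∀ t, t ≤ s → (∑ u ∈ Finset.range t, (c u : ℝ)) ≤ (ε * d) * t := by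
    intro t ht
    have h1 := hexpander (P t) (by rw [hPcard t ht]; exact le_trans ht hx)
    rw [hPcard t ht] at h1
    have h2 := claimA t ht
    have h3 : (((P t).biUnion Nb).card : ℝ) + ∑ u ∈ Finset.range t, (c u : ℝ) = (d : ℝ) * t := by
      rw [← Nat.cast_sum]
      exact_mod_cast congrArg (Nat.cast : ℕ → ℝ) h2
    nlinarith [h1, h3]
  -- total weight
  have hsum_a : ∑ t ∈ Finset.range s, a t = ∑ i, |x i| := by
    have h1 : ∑ t ∈ Finset.range s, a t = ∑ i ∈ P s, |x i| := by
      rw [hP, Finset.sum_image (fun u hu v hv he => hinj (by simpa using hu) (by simpa using hv) he)]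
    rw [h1, himage]
    apply Finset.sum_subset (Finset.subset_univ S)
    intro i _ hi
    have : x i = 0 := by
      by_contra h
      exact hi (by simp [hSdef, h])
    simp [this]
  have habel : ∑ t ∈ Finset.range s, (c t : ℝ) * a t ≤ (ε * d) * ∑ i, |x i| := by
    rw [← hsum_a]
    apply abel_bound
    · intro t _; positivity
    · intro t u htu hu; exact hanti t u htu hu
    · intro t _; positivity
    · exact hexp
  -- per-column lower estimate
  have hcol : ∀ j : Fin m,
      (∑ t ∈ Finset.range s, (if E (f t) j then a t else 0))
        - 2 * (∑ t ∈ Finset.range s, (if E (f t) j ∧ (∃ u < t, E (f u) j) then a t else 0))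
      ≤ |∑ i, (if E i j then (1 : ℝ) else 0) * x i| := by
    intro j
    have hgj : (∑ i, (if E i j then (1 : ℝ) else 0) * x i)
        = ∑ t ∈ Finset.range s, (if E (f t) j then x (f t) else 0) := by
      rw [hinner j]
      have h2 : (∑ i, (if E i j then x i else 0)) = ∑ i ∈ S, (if E i j then x i else 0) := by
        symm
        apply Finset.sum_subset (Finset.subset_univ S)
        intro i _ hi
        have : x i = 0 := by
          by_contra h
          exact hi (by simp [hSdef, h])
        simp [this]
      rw [h2, ← himage, hP,
        Finset.sum_image (fun u hu v hv he => hinj (by simpa using hu) (by simpa using hv) he)]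
    set F : Finset ℕ := (Finset.range s).filter (fun t => E (f t) j) with hF
    have hsum1 : (∑ t ∈ Finset.range s, (if E (f t) j then a t else 0)) = ∑ t ∈ F, a t := by
      rw [hF, Finset.sum_filter]
    have hsum2 : (∑ t ∈ Finset.range s, (if E (f t) j ∧ (∃ u < t, E (f u) j) then a t else 0))
        = ∑ t ∈ F.filter (fun t => ∃ u < t, E (f u) j), a t := by
      rw [hF, Finset.filter_filter, Finset.sum_filter]
    have hgj2 : (∑ t ∈ Finset.range s, (if E (f t) j then x (f t) else 0)) = ∑ t ∈ F, x (f t) := by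
      rw [hF, Finset.sum_filter]
    rw [hgj, hgj2, hsum1, hsum2]
    by_cases hFe : F = ∅
    · rw [hFe]
      simp only [Finset.filter_empty, Finset.sum_empty, mul_zero, sub_zero]
      exact abs_nonneg _
    · obtain hne := Finset.nonempty_of_ne_empty hFe
      set t0 := F.min' hne with ht0
      have ht0F : t0 ∈ F := F.min'_mem hne
      have hColl : F.filter (fun t => ∃ u < t, E (f u) j) = F.erase t0 := by
        ext t
        simp only [Finset.mem_filter, Finset.mem_erase]
        constructor
        · rintro ⟨htF, u, hut, hEu⟩
          refine ⟨?_, htF⟩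
          intro he
          have hts : t < s := Finset.mem_range.mp (Finset.mem_filter.mp htF).1
          have huF : u ∈ F := by
            rw [hF]; exact Finset.mem_filter.mpr ⟨Finset.mem_range.mpr (lt_trans hut hts), hEu⟩
          have := F.min'_le u huF
          omega
        · rintro ⟨hne2, htF⟩
          refine ⟨htF, t0, ?_, (Finset.mem_filter.mp ht0F).2⟩
          have := F.min'_le t htF
          omega
      rw [hColl]
      have e1 : x (f t0) + ∑ t ∈ F.erase t0, x (f t) = ∑ t ∈ F, x (f t) :=
        Finset.add_sum_erase F (fun t => x (f t)) ht0F
      have e2 : a t0 + ∑ t ∈ F.erase t0, a t = ∑ t ∈ F, a t :=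
        Finset.add_sum_erase F a ht0F
      have e3 : |∑ t ∈ F.erase t0, x (f t)| ≤ ∑ t ∈ F.erase t0, a t :=
        Finset.abs_sum_le_sum_abs _ _
      have e4 : a t0 - ∑ t ∈ F.erase t0, a t ≤ |∑ t ∈ F, x (f t)| := by
        have h5 : |x (f t0)| ≤ |∑ t ∈ F, x (f t)| + |∑ t ∈ F.erase t0, x (f t)| := by
          have hxe : x (f t0) = (∑ t ∈ F, x (f t)) + (-(∑ t ∈ F.erase t0, x (f t))) := by
            rw [← e1]; ring
          calc |x (f t0)| = |(∑ t ∈ F, x (f t)) + (-(∑ t ∈ F.erase t0, x (f t)))| := by rw [← hxe]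
            _ ≤ |∑ t ∈ F, x (f t)| + |(-(∑ t ∈ F.erase t0, x (f t)))| := abs_add_le _ _
            _ = |∑ t ∈ F, x (f t)| + |∑ t ∈ F.erase t0, x (f t)| := by rw [abs_neg]
        have ha0 : a t0 = |x (f t0)| := rfl
        linarith
      linarith
  -- sum over j and swap
  have hswap1 : ∑ j, ∑ t ∈ Finset.range s, (if E (f t) j then a t else 0)
      = (d : ℝ) * ∑ t ∈ Finset.range s, a t := by
    rw [Finset.sum_comm, Finset.mul_sum]
    apply Finset.sum_congr rfl
    intro t _
    rw [← Finset.sum_filter, Finset.sum_const, hdeg (f t), nsmul_eq_mul]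
  have hswap2 : ∑ j, ∑ t ∈ Finset.range s, (if E (f t) j ∧ (∃ u < t, E (f u) j) then a t else 0)
      = ∑ t ∈ Finset.range s, (c t : ℝ) * a t := by
    rw [Finset.sum_comm]
    apply Finset.sum_congr rfl
    intro t ht
    rw [← Finset.sum_filter, Finset.sum_const, nsmul_eq_mul]
    congr 2
    rw [hc]
    congr 1
    ext j
    simp only [hNb, hP, Finset.mem_filter, Finset.mem_univ, true_and, Finset.mem_inter,
      Finset.mem_biUnion, Finset.mem_image, Finset.mem_range]
    constructor
    · rintro ⟨hE, u, hut, hEu⟩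
      exact ⟨hE, f u, ⟨u, hut, rfl⟩, hEu⟩
    · rintro ⟨hE, i, ⟨u, hut, rfl⟩, hEu⟩
      exact ⟨hE, u, hut, hEu⟩
  have hfinal : (d : ℝ) * (∑ i, |x i|) - 2 * ∑ t ∈ Finset.range s, (c t : ℝ) * a t
      ≤ ∑ j, |∑ i, (if E i j then (1 : ℝ) else 0) * x i| := by
    have hsle := Finset.sum_le_sum (fun j (_ : j ∈ (Finset.univ : Finset (Fin m))) => hcol j)
    rw [Finset.sum_sub_distrib] at hsle
    rw [hswap1, hsum_a] at hsle
    rw [← Finset.mul_sum, hswap2] at hsle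
    linarith
  linarith [habel, hfinal]
end

section
/- Greedy head approximation guarantee (Hochbaum–Pathria): For every ε > 0, the greedy algorithm that iteratively selects the group covering the largest total weight of uncovered elements, run for ⌈G·log₂(1/ε)⌉ iterations, covers a total weight of at least (1−ε) times the maximum total weight coverable by any G groups. That is, it is a ((1−ε), G, ⌈G log₂(1/ε)⌉, 1)-head approximation. -/
open Finset

/-- Total weight covered by a selection `I` of groups. -/
def coveredWeight {N M : ℕ} (Gr : Fin M → Finset (Fin N)) (w : Fin N → ℝ)
    (I : Finset (Fin M)) : ℝ :=
  ∑ j ∈ I.biUnion Gr, w j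

section aux
variable {N M : ℕ} (Gr : Fin M → Finset (Fin N)) (w : Fin N → ℝ)

lemma cov_nonneg (hw : ∀ j, 0 ≤ w j) (I : Finset (Fin M)) :
    0 ≤ coveredWeight Gr w I :=
  Finset.sum_nonneg fun j _ => hw j

lemma cov_mono (hw : ∀ j, 0 ≤ w j) {I J : Finset (Fin M)} (h : I ⊆ J) :
    coveredWeight Gr w I ≤ coveredWeight Gr w J :=
  Finset.sum_le_sum_of_subset_of_nonneg
    (Finset.biUnion_subset_biUnion_of_subset_left Gr h) (fun j _ _ => hw j)

lemma cov_insert (i : Fin M) (S : Finset (Fin M)) :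
    coveredWeight Gr w (insert i S)
      = coveredWeight Gr w S + ∑ j ∈ Gr i \ S.biUnion Gr, w j := by
  unfold coveredWeight
  rw [Finset.biUnion_insert, Finset.union_comm, ← Finset.union_sdiff_self_eq_union,
    Finset.sum_union Finset.disjoint_sdiff]

lemma cov_union_le (hw : ∀ j, 0 ≤ w j) (S I : Finset (Fin M)) :
    coveredWeight Gr w (S ∪ I) ≤ coveredWeight Gr w S
      + ∑ i ∈ I, (coveredWeight Gr w (insert i S) - coveredWeight Gr w S) := by
  classical
  induction I using Finset.induction with
  | empty => simp
  | @insert a I ha ih =>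
    rw [Finset.union_insert, Finset.sum_insert ha, cov_insert, cov_insert]
    have hsub : ∑ j ∈ Gr a \ (S ∪ I).biUnion Gr, w j ≤ ∑ j ∈ Gr a \ S.biUnion Gr, w j := by
      apply Finset.sum_le_sum_of_subset_of_nonneg
      · exact Finset.sdiff_subset_sdiff (le_refl _)
          (Finset.biUnion_subset_biUnion_of_subset_left Gr Finset.subset_union_left)
      · exact fun j _ _ => hw j
    linarith

end aux

/-- Hochbaum–Pathria: a greedy sequence of `⌈G log₂(1/ε)⌉` groups,
each step picking a group covering the largest additional weight, covers at least
`(1−ε)` times the maximum weight coverable by any `G` groups: a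
`((1−ε), G, ⌈G log₂(1/ε)⌉, 1)`-head approximation. -/
theorem greedy_head_approximation
    {N M G : ℕ} (Gr : Fin M → Finset (Fin N)) (w : Fin N → ℝ)
    (hw : ∀ j, 0 ≤ w j) (ε : ℝ) (hε : 0 < ε)
    (T : ℕ) (hT : T = ⌈(G : ℝ) * Real.logb 2 (1 / ε)⌉₊)
    (g : Fin T → Fin M)
    (hgreedy : ∀ t : Fin T, ∀ i : Fin M,
      coveredWeight Gr w
          (insert i ((Finset.univ.filter (fun s : Fin T => s < t)).image g)) ≤
        coveredWeight Gr w
          (insert (g t) ((Finset.univ.filter (fun s : Fin T => s < t)).image g))) :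
    ∀ I : Finset (Fin M), I.card ≤ G →
      (1 - ε) * coveredWeight Gr w I ≤ coveredWeight Gr w (Finset.univ.image g) := by
  intro I hI
  have hcovg : 0 ≤ coveredWeight Gr w (Finset.univ.image g) := cov_nonneg Gr w hw _
  have hcovI : 0 ≤ coveredWeight Gr w I := cov_nonneg Gr w hw _
  rcases le_or_gt 1 ε with hε1 | hε1
  · calc (1 - ε) * coveredWeight Gr w I ≤ 0 :=
          mul_nonpos_of_nonpos_of_nonneg (by linarith) hcovI
      _ ≤ _ := hcovg
  rcases Nat.eq_zero_or_pos G with hG0 | hGpos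
  · have : I = ∅ := Finset.card_eq_zero.mp (Nat.le_zero.mp (hG0 ▸ hI))
    subst this
    simpa [coveredWeight] using hcovg
  -- main case
  have hG1 : (1 : ℝ) ≤ G := by exact_mod_cast hGpos
  have hGr : (0 : ℝ) < G := by linarith
  classical
  let A : ℕ → Finset (Fin M) :=
    fun n => (Finset.univ.filter (fun s : Fin T => (s : ℕ) < n)).image g
  have hAfilter : ∀ t : Fin T,
      (Finset.univ.filter (fun s : Fin T => s < t)).image g = A t := by
    intro t
    rfl
  have hAsucc : ∀ n (hn : n < T), A (n + 1) = insert (g ⟨n, hn⟩) (A n) := by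
    intro n hn
    show (Finset.univ.filter (fun s : Fin T => (s : ℕ) < n + 1)).image g
      = insert (g ⟨n, hn⟩) ((Finset.univ.filter (fun s : Fin T => (s : ℕ) < n)).image g)
    rw [← Finset.image_insert]
    congr 1
    ext s
    simp only [Finset.mem_filter, Finset.mem_univ, true_and, Finset.mem_insert, Fin.ext_iff]
    show (s : ℕ) < n + 1 ↔ (s : ℕ) = n ∨ (s : ℕ) < n
    omega
  have hAmono : ∀ n (hn : n < T), A n ⊆ A (n + 1) := by
    intro n hn
    rw [hAsucc n hn]; exact Finset.subset_insert _ _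
  let f : ℕ → ℝ := fun n => coveredWeight Gr w (A n)
  have hfdef : ∀ n, f n = coveredWeight Gr w (A n) := fun _ => rfl
  set r : ℝ := 1 - 1 / G with hr
  have hr0 : 0 ≤ r := by
    rw [hr]
    have : 1 / (G : ℝ) ≤ 1 := by
      rw [div_le_one hGr]; exact hG1
    linarith
  -- key recurrence
  have hrec : ∀ n (hn : n < T),
      coveredWeight Gr w I - f (n + 1) ≤ r * (coveredWeight Gr w I - f n) := by
    intro n hn
    set t : Fin T := ⟨n, hn⟩ with ht
    have hgt : coveredWeight Gr w (insert (g t) (A n)) = f (n + 1) := by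
      rw [hfdef, hAsucc n hn]
    have key1 : coveredWeight Gr w I ≤ f n + G * (f (n + 1) - f n) := by
      have h1 : coveredWeight Gr w I ≤ coveredWeight Gr w (A n ∪ I) :=
        cov_mono Gr w hw Finset.subset_union_right
      have h2 := cov_union_le Gr w hw (A n) I
      have h3 : ∀ i ∈ I, coveredWeight Gr w (insert i (A n)) - coveredWeight Gr w (A n)
          ≤ f (n + 1) - f n := by
        intro i _
        have hgr := hgreedy t i
        rw [hAfilter t] at hgr
        have htn : A ((t : ℕ)) = A n := rfl
        rw [htn, hgt] at hgr
        have hfn : coveredWeight Gr w (A n) = f n := rfl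
        linarith [hgr]
      have h4 : ∑ i ∈ I, (coveredWeight Gr w (insert i (A n)) - coveredWeight Gr w (A n))
          ≤ (I.card : ℝ) * (f (n + 1) - f n) := by
        calc _ ≤ ∑ _i ∈ I, (f (n + 1) - f n) := Finset.sum_le_sum h3
          _ = (I.card : ℝ) * (f (n + 1) - f n) := by rw [Finset.sum_const, nsmul_eq_mul]
      have hgain : 0 ≤ f (n + 1) - f n := by
        have := cov_mono Gr w hw (hAmono n hn)
        rw [← hfdef, ← hfdef] at this
        linarith
      have h5 : (I.card : ℝ) * (f (n + 1) - f n) ≤ (G : ℝ) * (f (n + 1) - f n) := by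
        apply mul_le_mul_of_nonneg_right _ hgain
        exact_mod_cast hI
      have hfn : coveredWeight Gr w (A n) = f n := rfl
      calc coveredWeight Gr w I ≤ coveredWeight Gr w (A n ∪ I) := h1
        _ ≤ f n + ∑ i ∈ I, (coveredWeight Gr w (insert i (A n)) - coveredWeight Gr w (A n)) := by
            rw [← hfn]; exact h2
        _ ≤ f n + (I.card : ℝ) * (f (n + 1) - f n) := by linarith
        _ ≤ f n + (G : ℝ) * (f (n + 1) - f n) := by linarith
    have hrG : r = ((G : ℝ) - 1) / G := by rw [hr]; field_simp
    rw [hrG, div_mul_eq_mul_div, le_div_iff₀ hGr]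
    nlinarith [key1]
  have hAT : f T = coveredWeight Gr w (Finset.univ.image g) := by
    rw [hfdef]
    congr 1
    show (Finset.univ.filter (fun s : Fin T => (s : ℕ) < T)).image g = _
    congr 1
    apply Finset.filter_true_of_mem
    intro s _; exact s.isLt
  have hf0 : f 0 = 0 := by
    have hA0 : A 0 = ∅ := by
      show (Finset.univ.filter (fun s : Fin T => (s : ℕ) < 0)).image g = ∅
      simp
    rw [hfdef, hA0]; simp [coveredWeight]
  -- decay
  have hdecay : ∀ n, n ≤ T → coveredWeight Gr w I - f n ≤ r ^ n * coveredWeight Gr w I := by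
    intro n
    induction n with
    | zero => intro _; rw [hf0, pow_zero]; linarith
    | succ n ih =>
      intro hn1
      have hn : n < T := hn1
      have h1 := hrec n hn
      have h2 := ih (le_of_lt hn)
      calc coveredWeight Gr w I - f (n + 1) ≤ r * (coveredWeight Gr w I - f n) := h1
        _ ≤ r * (r ^ n * coveredWeight Gr w I) := mul_le_mul_of_nonneg_left h2 hr0
        _ = r ^ (n + 1) * coveredWeight Gr w I := by ring
  have hfinal := hdecay T (le_refl T)
  -- bound r ^ T ≤ ε
  have hlogpos : 0 < Real.log (1 / ε) := by
    apply Real.log_pos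
    rw [one_lt_div hε]; exact hε1
  have hTge : (G : ℝ) * Real.log (1 / ε) ≤ T := by
    have h1 : Real.log (1 / ε) ≤ Real.logb 2 (1 / ε) := by
      rw [Real.logb, le_div_iff₀ (Real.log_pos one_lt_two)]
      nlinarith [Real.log_two_lt_d9, hlogpos]
    calc (G : ℝ) * Real.log (1 / ε) ≤ (G : ℝ) * Real.logb 2 (1 / ε) := by
          apply mul_le_mul_of_nonneg_left h1 (le_of_lt hGr)
      _ ≤ T := by rw [hT]; exact Nat.le_ceil _
  have hrT : r ^ T ≤ ε := by
    have h1 : r ≤ Real.exp (-(1 / G)) := by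
      have := Real.add_one_le_exp (-(1 / (G : ℝ)))
      rw [hr]; linarith
    have h2 : r ^ T ≤ Real.exp (-(1 / G)) ^ T := pow_le_pow_left₀ hr0 h1 T
    have h3 : Real.exp (-(1 / (G : ℝ))) ^ T = Real.exp ((T : ℝ) * (-(1 / G))) :=
      (Real.exp_nat_mul _ T).symm
    have h4 : Real.exp ((T : ℝ) * (-(1 / (G : ℝ)))) ≤ ε := by
      rw [show ε = Real.exp (Real.log ε) from (Real.exp_log hε).symm]
      apply Real.exp_le_exp.mpr
      have hlog : Real.log (1 / ε) = -Real.log ε := by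
        rw [one_div, Real.log_inv]
      rw [hlog] at hTge
      have hGinv : (1 / (G : ℝ)) * G = 1 := by field_simp
      nlinarith [hTge, hGr, hGinv]
    calc r ^ T ≤ Real.exp (-(1 / G)) ^ T := h2
      _ = Real.exp ((T : ℝ) * (-(1 / G))) := h3
      _ ≤ ε := h4
  rw [hAT] at hfinal
  have : r ^ T * coveredWeight Gr w I ≤ ε * coveredWeight Gr w I :=
    mul_le_mul_of_nonneg_right hrT hcovI
  linarith
end

section
/- Optimal dual solution of the Benders subproblem: Let v ∈ {0,1}^M, I_v = {i ∈ [N] : Σ_{j : i ∈ G_j} v_j > 0}, and let I_v^K ⊆ I_v be the indices of the K largest weights w_i (w ≥ 0) in I_v. Set α* = max_{i ∈ I_v \ I_v^K} w_i (or 0 if that set is empty), β*_i = w_i for i ∉ I_v and 0 otherwise, γ*_i = w_i − α* for i ∈ I_v^K and 0 otherwise. Then (α*, β*, γ*) is an optimal solution of: minimize αK + Σ_i β_i(Σ_{j : i∈G_j} v_j) + Σ_i γ_i subject to α + β_i + γ_i ≥ w_i for all i ∈ [N], α, β, γ ≥ 0. -/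
open Finset

/-- Number of selected groups covering element `i` (as a real). -/
def coverCount {N M : ℕ} (Gr : Fin M → Finset (Fin N)) (V : Finset (Fin M))
    (i : Fin N) : ℝ :=
  ((V.filter (fun j => i ∈ Gr j)).card : ℝ)

/-- Objective of the Benders subproblem (the LP dual). -/
def dualObj {N : ℕ} (K : ℕ) (cnt : Fin N → ℝ) (α : ℝ) (β γ : Fin N → ℝ) : ℝ :=
  α * K + ∑ i, β i * cnt i + ∑ i, γ i

/-- the explicit dual solution `(α*, β*, γ*)` built from the covered
index set `I_v` and its `K` heaviest indices `I_v^K` is feasible and optimal for the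
Benders subproblem. -/
theorem benders_dual_optimal
    {N M K : ℕ} (Gr : Fin M → Finset (Fin N)) (w : Fin N → ℝ)
    (hw : ∀ i, 0 ≤ w i) (V : Finset (Fin M)) (Iv IK : Finset (Fin N))
    (hIv : Iv = Finset.univ.filter (fun i => ∃ j ∈ V, i ∈ Gr j))
    (hIK : IK ⊆ Iv) (hcard : IK.card = min K Iv.card)
    (hlargest : ∀ i ∈ IK, ∀ i' ∈ Iv \ IK, w i' ≤ w i) :
    let αs : ℝ := Finset.fold max 0 w (Iv \ IK)
    let βs : Fin N → ℝ := fun i => if i ∈ Iv then 0 else w i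
    let γs : Fin N → ℝ := fun i => if i ∈ IK then w i - αs else 0
    (0 ≤ αs ∧ (∀ i, 0 ≤ βs i) ∧ (∀ i, 0 ≤ γs i) ∧
      (∀ i, w i ≤ αs + βs i + γs i)) ∧
    (∀ (α : ℝ) (β γ : Fin N → ℝ), 0 ≤ α → (∀ i, 0 ≤ β i) → (∀ i, 0 ≤ γ i) →
      (∀ i, w i ≤ α + β i + γ i) →
      dualObj K (coverCount Gr V) αs βs γs ≤ dualObj K (coverCount Gr V) α β γ) := by
  intro αs βs γs
  have hαdef : αs = Finset.fold max 0 w (Iv \ IK) := rfl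
  have hβdef : ∀ i, βs i = if i ∈ Iv then 0 else w i := fun _ => rfl
  have hγdef : ∀ i, γs i = if i ∈ IK then w i - αs else 0 := fun _ => rfl
  have hK : IK.card ≤ K := by rw [hcard]; exact min_le_left _ _
  have hαs : 0 ≤ αs := by rw [hαdef]; exact (Finset.le_fold_max _).mpr (Or.inl le_rfl)
  have hαle : ∀ i ∈ IK, αs ≤ w i := by
    intro i hi
    rw [hαdef]
    exact (Finset.fold_max_le _).mpr ⟨hw i, fun x hx => hlargest i hi x hx⟩
  have hβs : ∀ i, 0 ≤ βs i := by
    intro i; rw [hβdef]; split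
    · exact le_rfl
    · exact hw i
  have hγs : ∀ i, 0 ≤ γs i := by
    intro i; rw [hγdef]; split
    · rename_i h; linarith [hαle i h]
    · exact le_rfl
  have hfeas : ∀ i, w i ≤ αs + βs i + γs i := by
    intro i
    rw [hβdef, hγdef]
    by_cases hik : i ∈ IK
    · have : i ∈ Iv := hIK hik
      simp [hik, this]
    · by_cases hiv : i ∈ Iv
      · have : αs ≥ w i := by
          rw [hαdef]
          exact (Finset.le_fold_max _).mpr (Or.inr ⟨i, Finset.mem_sdiff.mpr ⟨hiv, hik⟩, le_rfl⟩)
        simp [hik, hiv]; linarith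
      · simp [hik, hiv]; linarith [hαs]
  refine ⟨⟨hαs, hβs, hγs, hfeas⟩, ?_⟩
  -- facts about coverCount
  have hcnt_nonneg : ∀ i, 0 ≤ coverCount Gr V i := fun i => Nat.cast_nonneg _
  have hcnt0 : ∀ i, i ∉ Iv → coverCount Gr V i = 0 := by
    intro i hi
    unfold coverCount
    have he : V.filter (fun j => i ∈ Gr j) = ∅ := Finset.filter_eq_empty_iff.mpr (by
      intro j hj hG
      exact hi (by rw [hIv]; exact Finset.mem_filter.mpr ⟨Finset.mem_univ i, ⟨j, hj, hG⟩⟩))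
    rw [he]
    simp
  have hcnt1 : ∀ i, i ∈ Iv → (1:ℝ) ≤ coverCount Gr V i := by
    intro i hi
    rw [hIv] at hi
    simp only [Finset.mem_filter, Finset.mem_univ, true_and] at hi
    obtain ⟨j, hjV, hjG⟩ := hi
    unfold coverCount
    have : 0 < (V.filter (fun j => i ∈ Gr j)).card :=
      Finset.card_pos.mpr ⟨j, Finset.mem_filter.mpr ⟨hjV, hjG⟩⟩
    exact_mod_cast this
  -- value of the star solution
  have hstar : dualObj K (coverCount Gr V) αs βs γs = ∑ i ∈ IK, w i := by
    unfold dualObj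
    have h1 : ∑ i, βs i * coverCount Gr V i = 0 := Finset.sum_eq_zero (fun i _ => by
      by_cases h : i ∈ Iv
      · rw [hβdef]; simp [h]
      · rw [hcnt0 i h]; ring)
    have h2 : ∑ i, γs i = ∑ i ∈ IK, (w i - αs) := by
      calc ∑ i, γs i = ∑ i ∈ Finset.univ ∩ IK, (w i - αs) := by
            rw [← Finset.sum_ite_mem]
        _ = ∑ i ∈ IK, (w i - αs) := by rw [Finset.univ_inter]
    rw [h1, h2, Finset.sum_sub_distrib, Finset.sum_const, nsmul_eq_mul]
    have h3 : αs * K = (IK.card : ℝ) * αs := by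
      by_cases hc : IK.card = K
      · rw [hc]; ring
      · have hIvc : IK.card = Iv.card := by omega
        have hIKIv : IK = Iv := Finset.eq_of_subset_of_card_le hIK (le_of_eq hIvc.symm)
        have hempty : Iv \ IK = ∅ := by rw [hIKIv]; simp
        have hα0 : αs = 0 := by rw [hαdef, hempty]; simp
        rw [hα0]; ring
    rw [h3]; ring
  intro α β γ hα hβ hγ hfeas'
  rw [hstar]
  have c1 : ∑ i ∈ IK, w i ≤ ∑ i ∈ IK, (α + β i + γ i) :=
    Finset.sum_le_sum (fun i _ => hfeas' i)
  have c2 : ∑ i ∈ IK, (α + β i + γ i) = (IK.card : ℝ) * α + ∑ i ∈ IK, β i + ∑ i ∈ IK, γ i := by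
    rw [Finset.sum_add_distrib, Finset.sum_add_distrib, Finset.sum_const, nsmul_eq_mul]
  have c3 : (IK.card : ℝ) * α ≤ α * K := by
    rw [mul_comm]
    exact mul_le_mul_of_nonneg_left (by exact_mod_cast hK) hα
  have c4 : ∑ i ∈ IK, β i ≤ ∑ i, β i * coverCount Gr V i := by
    calc ∑ i ∈ IK, β i ≤ ∑ i ∈ IK, β i * coverCount Gr V i :=
          Finset.sum_le_sum (fun i hi => le_mul_of_one_le_right (hβ i) (hcnt1 i (hIK hi)))
      _ ≤ ∑ i, β i * coverCount Gr V i :=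
          Finset.sum_le_sum_of_subset_of_nonneg (Finset.subset_univ _)
            (fun i _ _ => mul_nonneg (hβ i) (hcnt_nonneg i))
  have c5 : ∑ i ∈ IK, γ i ≤ ∑ i, γ i :=
    Finset.sum_le_sum_of_subset_of_nonneg (Finset.subset_univ _) (fun i _ _ => hγ i)
  unfold dualObj
  linarith
end
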